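/- For every λ ∈ ℝ, let μ_λ be the Lie bracket on ℝ^7 with nonzero basis brackets [e1,e2]=e4, [e1,e3]=e5, [e1,e4]=e6, [e1,e6]=e7, [e2,e3]=e6, [e2,e4]=λe7, [e2,e5]=e7, [e3,e5]=e7. Then μ_λ satisfies the Jacobi identity, φ = (5/17)·diag(1,2,2,3,3,4,5) is a derivation of (ℝ^7,μ_λ), and φ is pre-Einstein, i.e. trace(φ∘ψ) = trace(ψ) for every derivation ψ of (ℝ^7,μ_λ). -/
import Mathlib


open Finset

noncomputable section

/-- `ℝ⁷` with its standard basis and standard inner product. -/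
abbrev V7 : Type := Fin 7 → ℝ

/-- The standard basis vector `e i`. -/
def e (i : Fin 7) : V7 := Pi.single i 1

/-- The standard inner product on `ℝ⁷`. -/
def dot (x y : V7) : ℝ := ∑ i, x i * y i

/-- Structure constants built from a list of entries `(i, j, k, a)`, each meaning that
`μ (e i) (e j)` has component `a` along `e k` (and `μ (e j) (e i)` has component `-a`);
all unlisted basis brackets are `0`. -/
def toC (L : List (Fin 7 × Fin 7 × Fin 7 × ℝ)) (i j k : Fin 7) : ℝ :=
  (L.map fun t =>
      (if t.1 = i ∧ t.2.1 = j ∧ t.2.2.1 = k then t.2.2.2 else 0)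
    - (if t.1 = j ∧ t.2.1 = i ∧ t.2.2.1 = k then t.2.2.2 else 0)).sum

/-- The bilinear skew-symmetric map on `ℝ⁷` with structure constants `c`. -/
def br (c : Fin 7 → Fin 7 → Fin 7 → ℝ) (x y : V7) : V7 :=
  fun k => ∑ i, ∑ j, x i * y j * c i j k

lemma br_add_left (c : Fin 7 → Fin 7 → Fin 7 → ℝ) (x x' y : V7) :
    br c (x + x') y = br c x y + br c x' y := by
  funext k
  simp only [br, Pi.add_apply, ← Finset.sum_add_distrib]
  exact Finset.sum_congr rfl fun i _ => Finset.sum_congr rfl fun j _ => by ring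

lemma br_smul_left (c : Fin 7 → Fin 7 → Fin 7 → ℝ) (r : ℝ) (x y : V7) :
    br c (r • x) y = r • br c x y := by
  funext k
  simp only [br, Pi.smul_apply, smul_eq_mul, Finset.mul_sum]
  exact Finset.sum_congr rfl fun i _ => Finset.sum_congr rfl fun j _ => by ring

lemma br_add_right (c : Fin 7 → Fin 7 → Fin 7 → ℝ) (x y y' : V7) :
    br c x (y + y') = br c x y + br c x y' := by
  funext k
  simp only [br, Pi.add_apply, ← Finset.sum_add_distrib]
  exact Finset.sum_congr rfl fun i _ => Finset.sum_congr rfl fun j _ => by ring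

lemma br_smul_right (c : Fin 7 → Fin 7 → Fin 7 → ℝ) (r : ℝ) (x y : V7) :
    br c x (r • y) = r • br c x y := by
  funext k
  simp only [br, Pi.smul_apply, smul_eq_mul, Finset.mul_sum]
  exact Finset.sum_congr rfl fun i _ => Finset.sum_congr rfl fun j _ => by ring

lemma br_zero_left (c : Fin 7 → Fin 7 → Fin 7 → ℝ) (y : V7) : br c 0 y = 0 := by
  funext k; simp [br]

lemma br_zero_right (c : Fin 7 → Fin 7 → Fin 7 → ℝ) (x : V7) : br c x 0 = 0 := by
  funext k; simp [br]

/-- The space of derivations of the algebra `(ℝ⁷, br c)`, i.e. the linear maps `D` with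
`D (μ x y) = μ (D x) y + μ x (D y)` for all `x, y`, as a submodule of the endomorphisms. -/
def derivations (c : Fin 7 → Fin 7 → Fin 7 → ℝ) : Submodule ℝ (Module.End ℝ V7) where
  carrier := {D | ∀ x y, D (br c x y) = br c (D x) y + br c x (D y)}
  add_mem' := by
    intro D E hD hE x y
    simp only [LinearMap.add_apply, hD x y, hE x y, br_add_left, br_add_right]
    abel
  zero_mem' := by
    intro x y
    simp [br_zero_left, br_zero_right]
  smul_mem' := by
    intro r D hD x y
    simp only [LinearMap.smul_apply, hD x y, smul_add, br_smul_left, br_smul_right]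

/-- The Jacobi identity for the bracket `br c`. -/
def Jacobi (c : Fin 7 → Fin 7 → Fin 7 → ℝ) : Prop :=
  ∀ x y z : V7, br c (br c x y) z + br c (br c y z) x + br c (br c z x) y = 0

/-- Skew-symmetry of the bracket `br c`. -/
def Skew (c : Fin 7 → Fin 7 → Fin 7 → ℝ) : Prop :=
  ∀ x y : V7, br c x y = - br c y x

/-- The diagonal endomorphism `diag (a 1, …, a 7)` of `ℝ⁷`, `e i ↦ a i • e i`. -/
def diagL (a : Fin 7 → ℝ) : Module.End ℝ V7 :=
  LinearMap.pi fun i => a i • LinearMap.proj i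

/-- Structure constants of the bracket `μ_λ` with nonzero basis brackets
`[e1,e2]=e4, [e1,e3]=e5, [e1,e4]=e6, [e1,e6]=e7, [e2,e3]=e6, [e2,e4]=λe7, [e2,e5]=e7,
[e3,e5]=e7`. -/
def c7 (lam : ℝ) : Fin 7 → Fin 7 → Fin 7 → ℝ :=
  toC [(0, 1, 3, (1:ℝ)),
   (0, 2, 4, 1),
   (0, 3, 5, 1),
   (0, 5, 6, 1),
   (1, 2, 5, 1),
   (1, 3, 6, lam),
   (1, 4, 6, 1),
   (2, 4, 6, 1)]

def rhs7 (lam : ℝ) (x y : V7) : V7 := fun k =>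
  if k = 3 then x 0 * y 1 - x 1 * y 0
  else if k = 4 then x 0 * y 2 - x 2 * y 0
  else if k = 5 then (x 0 * y 3 - x 3 * y 0) + (x 1 * y 2 - x 2 * y 1)
  else if k = 6 then (x 0 * y 5 - x 5 * y 0) + lam * (x 1 * y 3 - x 3 * y 1)
    + (x 1 * y 4 - x 4 * y 1) + (x 2 * y 4 - x 4 * y 2)
  else 0

lemma br_c7 (lam : ℝ) (x y : V7) : br (c7 lam) x y = rhs7 lam x y := by
  funext k
  fin_cases k <;>
  · simp [br, c7, toC, rhs7, Fin.sum_univ_seven]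
    try ring

lemma skew7 (lam : ℝ) : Skew (c7 lam) := by
  intro x y
  rw [br_c7, br_c7]
  funext k
  fin_cases k <;> simp [rhs7] <;> ring

lemma jacobi7 (lam : ℝ) : Jacobi (c7 lam) := by
  intro x y z
  simp only [br_c7]
  funext k
  fin_cases k <;> simp [rhs7] <;> ring

lemma w2 : (![1, 2, 2, 3, 3, 4, 5] : Fin 7 → ℝ) 2 = 2 := rfl
lemma w3 : (![1, 2, 2, 3, 3, 4, 5] : Fin 7 → ℝ) 3 = 3 := rfl
lemma w4 : (![1, 2, 2, 3, 3, 4, 5] : Fin 7 → ℝ) 4 = 3 := rfl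
lemma w5 : (![1, 2, 2, 3, 3, 4, 5] : Fin 7 → ℝ) 5 = 4 := rfl
lemma w6 : (![1, 2, 2, 3, 3, 4, 5] : Fin 7 → ℝ) 6 = 5 := rfl

lemma phi_der (lam : ℝ) :
    ((5/17 : ℝ) • diagL ![1, 2, 2, 3, 3, 4, 5]) ∈ derivations (c7 lam) := by
  intro x y
  simp only [LinearMap.smul_apply, br_c7, br_smul_left, br_smul_right]
  funext k
  fin_cases k <;>
    simp [rhs7, diagL, LinearMap.pi_apply, Matrix.cons_val_zero, Matrix.cons_val_one,
      Matrix.head_cons, w5, w6] <;> ring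

lemma trace_eq7 (f : Module.End ℝ V7) : LinearMap.trace ℝ V7 f = ∑ i, f (e i) i := by
  rw [LinearMap.trace_eq_matrix_trace ℝ (Pi.basisFun ℝ (Fin 7))]
  simp [Matrix.trace, Matrix.diag, LinearMap.toMatrix_apply, e]

lemma preE (lam : ℝ) : ∀ ψ ∈ derivations (c7 lam),
    LinearMap.trace ℝ V7 (((5/17 : ℝ) • diagL ![1, 2, 2, 3, 3, 4, 5]) ∘ₗ ψ)
      = LinearMap.trace ℝ V7 ψ := by
  intro ψ hψ
  have hb01 : br (c7 lam) (e 0) (e 1) = e 3 := by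
    rw [br_c7]; funext k; fin_cases k <;> simp [rhs7, e, Pi.single_apply]
  have hb02 : br (c7 lam) (e 0) (e 2) = e 4 := by
    rw [br_c7]; funext k; fin_cases k <;> simp [rhs7, e, Pi.single_apply]
  have hb03 : br (c7 lam) (e 0) (e 3) = e 5 := by
    rw [br_c7]; funext k; fin_cases k <;> simp [rhs7, e, Pi.single_apply]
  have hb04 : br (c7 lam) (e 0) (e 4) = 0 := by
    rw [br_c7]; funext k; fin_cases k <;> simp [rhs7, e, Pi.single_apply]
  have hb05 : br (c7 lam) (e 0) (e 5) = e 6 := by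
    rw [br_c7]; funext k; fin_cases k <;> simp [rhs7, e, Pi.single_apply]
  have hb12 : br (c7 lam) (e 1) (e 2) = e 5 := by
    rw [br_c7]; funext k; fin_cases k <;> simp [rhs7, e, Pi.single_apply]
  have hb24 : br (c7 lam) (e 2) (e 4) = e 6 := by
    rw [br_c7]; funext k; fin_cases k <;> simp [rhs7, e, Pi.single_apply]
  have h01 := congrFun (hψ (e 0) (e 1)) 3
  rw [hb01] at h01
  simp [br_c7, rhs7, e, Pi.single_apply] at h01
  have h02 := congrFun (hψ (e 0) (e 2)) 3
  rw [hb02] at h02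
  simp [br_c7, rhs7, e, Pi.single_apply] at h02
  have h03 := congrFun (hψ (e 0) (e 3)) 5
  rw [hb03] at h03
  simp [br_c7, rhs7, e, Pi.single_apply] at h03
  have h04 := congrFun (hψ (e 0) (e 4)) 5
  rw [hb04, map_zero] at h04
  simp [br_c7, rhs7, e, Pi.single_apply] at h04
  have h05 := congrFun (hψ (e 0) (e 5)) 6
  rw [hb05] at h05
  simp [br_c7, rhs7, e, Pi.single_apply] at h05
  have h12 := congrFun (hψ (e 1) (e 2)) 5
  rw [hb12] at h12
  simp [br_c7, rhs7, e, Pi.single_apply] at h12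
  have h24 := congrFun (hψ (e 2) (e 4)) 6
  rw [hb24] at h24
  simp [br_c7, rhs7, e, Pi.single_apply] at h24
  rw [trace_eq7, trace_eq7]
  simp only [LinearMap.comp_apply, LinearMap.smul_apply, Pi.smul_apply, diagL,
    LinearMap.pi_apply, LinearMap.smul_apply, LinearMap.proj_apply, Fin.sum_univ_seven,
    smul_eq_mul, e, w2, w3, w4, w5, w6, Matrix.cons_val_zero, Matrix.cons_val_one, Matrix.head_cons]
  linarith [h01, h02, h03, h04, h05, h12, h24]

/-- The bracket satisfies the Jacobi identity (and is skew-symmetric), `φ` is a derivation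
of it, and `φ` is pre-Einstein: `trace (φ ∘ ψ) = trace ψ` for every derivation `ψ`. -/
theorem stmt (lam : ℝ) :
    Skew (c7 lam) ∧ Jacobi (c7 lam) ∧
    ((5/17 : ℝ) • diagL ![1, 2, 2, 3, 3, 4, 5]) ∈ derivations (c7 lam) ∧
    ∀ ψ ∈ derivations (c7 lam),
      LinearMap.trace ℝ V7 (((5/17 : ℝ) • diagL ![1, 2, 2, 3, 3, 4, 5]) ∘ₗ ψ) = LinearMap.trace ℝ V7 ψ :=
  ⟨skew7 lam, jacobi7 lam, phi_der lam, preE lam⟩
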